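/- Let t ≥ 1, d ≥ 1 and 2 ≤ v_1 ≤ v_2 ≤ ⋯ ≤ v_{t+1} with d < v_1, and set N = (d+1)·v_2·v_3⋯v_{t+1}. An N×(t+1) array A of type (v_1,…,v_{t+1}) is a (d,t)-DTA(N; t+1, (v_1,…,v_{t+1})) of optimum size meeting the lower bound N = (d+1)·∏_{i=2}^{t+1} v_i if and only if A is a super-simple MCA_{d+1}(N; t, t+1, (v_1,…,v_{t+1})) of optimum size N = (d+1)·∏_{i=2}^{t+1} v_i. -/

import Mathlib

/-- An array `A` (rows indexed by `R`, columns by `J`) is of type `v` if every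
entry in column `j` lies in `Z_{v j} = {0, 1, …, v j - 1}`. -/
def IsArray {R J : Type*} (v : J → ℕ) (A : R → J → ℕ) : Prop :=
  ∀ r j, A r j < v j

/-- An `s`-way interaction: a set of `s` pairs `(j, σ)` with pairwise distinct
column indices `j` and value `σ ∈ Z_{v j}`. -/
def IsInteraction {J : Type*} [DecidableEq J] (v : J → ℕ) (s : ℕ)
    (T : Finset (J × ℕ)) : Prop :=
  T.card = s ∧ (T.image Prod.fst).card = s ∧ ∀ p ∈ T, p.2 < v p.1

/-- `rho A T`: the set of rows of `A` in which the interaction `T` is covered. -/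
def rho {R J : Type*} [Fintype R] (A : R → J → ℕ) (T : Finset (J × ℕ)) :
    Finset R :=
  Finset.univ.filter fun r => ∀ p ∈ T, A r p.1 = p.2

/-- `rhoSet A 𝒯 = ⋃_{T ∈ 𝒯} rho A T`. -/
def rhoSet {R J : Type*} [Fintype R] [DecidableEq R] (A : R → J → ℕ)
    (Ts : Finset (Finset (J × ℕ))) : Finset R :=
  Ts.sup (rho A)

/-- A `(d,t)`-detecting array of type `v`: for every `t`-way interaction `T` and
every set `𝒯` of exactly `d` `t`-way interactions,
`ρ(A,T) ⊆ ρ(A,𝒯) ↔ T ∈ 𝒯`. -/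
def IsDTA {R J : Type*} [Fintype R] [DecidableEq R] [DecidableEq J] (v : J → ℕ) (d t : ℕ)
    (A : R → J → ℕ) : Prop :=
  IsArray v A ∧
    ∀ T : Finset (J × ℕ), IsInteraction v t T →
      ∀ Ts : Finset (Finset (J × ℕ)), Ts.card = d →
        (∀ T' ∈ Ts, IsInteraction v t T') →
          (rho A T ⊆ rhoSet A Ts ↔ T ∈ Ts)

/-- A mixed covering array `MCA_λ(N; t, k, v)`: an array of type `v` such that
`|ρ(A,T)| ≥ λ` for every `t`-way interaction `T`. -/
def IsMCA {R J : Type*} [Fintype R] [DecidableEq J] (v : J → ℕ) (lam t : ℕ)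
    (A : R → J → ℕ) : Prop :=
  IsArray v A ∧ ∀ T : Finset (J × ℕ), IsInteraction v t T → lam ≤ (rho A T).card

/-- Super-simple of strength `t`: every `(t+1)`-way interaction is covered by at
most one row. -/
def IsSuperSimple {R J : Type*} [Fintype R] [DecidableEq J] (v : J → ℕ) (t : ℕ)
    (A : R → J → ℕ) : Prop :=
  ∀ T : Finset (J × ℕ), IsInteraction v (t + 1) T → (rho A T).card ≤ 1

/-- An orthogonal array `OA_λ(t, k, v)`: all entries in `Z_v` and
`|ρ(A,T)| = λ` for every `t`-way interaction `T`. (The size requirement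
`N = λ·v^t` is imposed on the row-index type in the statements.) -/
def IsOA {R J : Type*} [Fintype R] [DecidableEq J] (vlev lam t : ℕ)
    (A : R → J → ℕ) : Prop :=
  IsArray (fun _ : J => vlev) A ∧
    ∀ T : Finset (J × ℕ), IsInteraction (fun _ : J => vlev) t T →
      (rho A T).card = lam

/-- `Te` is an extension of the interaction `T`: it is obtained from `T` by
adjoining one pair `(j, σ)` with `σ ∈ Z_{v j}` whose column index `j` occurs in
no pair of `T`. -/
def IsExtension {J : Type*} [DecidableEq J] (v : J → ℕ)
    (T Te : Finset (J × ℕ)) : Prop :=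
  ∃ p : J × ℕ, p.2 < v p.1 ∧ (∀ q ∈ T, q.1 ≠ p.1) ∧ Te = insert p T

/-- `A` is `d`-extendible (with respect to strength `t`): for every `t`-way
interaction `T` and every list of `d` extensions `T_1, …, T_d` of `T`
(repetitions allowed), `ρ(A,T) \ (ρ(A,T_1) ∪ ⋯ ∪ ρ(A,T_d))` is nonempty. -/
def IsExtendible {R J : Type*} [Fintype R] [DecidableEq J] (v : J → ℕ)
    (d t : ℕ) (A : R → J → ℕ) : Prop :=
  ∀ T : Finset (J × ℕ), IsInteraction v t T →
    ∀ Te : Fin d → Finset (J × ℕ), (∀ i, IsExtension v T (Te i)) →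
      ∃ r ∈ rho A T, ∀ i, r ∉ rho A (Te i)
lemma mem_rho {R J : Type*} [Fintype R] (A : R → J → ℕ) (T : Finset (J × ℕ)) (r : R) :
    r ∈ rho A T ↔ ∀ p ∈ T, A r p.1 = p.2 := by
  simp [rho]

lemma rho_anti {R J : Type*} [Fintype R] (A : R → J → ℕ) {T T' : Finset (J × ℕ)}
    (h : T ⊆ T') : rho A T' ⊆ rho A T := by
  intro r hr
  rw [mem_rho] at *
  exact fun p hp => hr p (h hp)

/-- Intersection of `ρ`'s of two distinct `t`-way interactions has at most one
row, in a super-simple array (columns indexed by `Fin (t+1)`). -/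
lemma inter_card_le_one {N t : ℕ} (v : Fin (t + 1) → ℕ) (A : Fin N → Fin (t + 1) → ℕ)
    (hss : IsSuperSimple v t A) {T T' : Finset (Fin (t + 1) × ℕ)}
    (hT : IsInteraction v t T) (hT' : IsInteraction v t T') (hne : T ≠ T') :
    (rho A T ∩ rho A T').card ≤ 1 := by
  have hsub : rho A T ∩ rho A T' ⊆ rho A (T ∪ T') := by
    intro r hr
    rw [Finset.mem_inter, mem_rho, mem_rho] at hr
    rw [mem_rho]
    intro p hp
    rcases Finset.mem_union.mp hp with h | h
    · exact hr.1 p h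
    · exact hr.2 p h
  rcases Classical.em (Set.InjOn Prod.fst (((T ∪ T') : Finset (Fin (t + 1) × ℕ)) : Set (Fin (t + 1) × ℕ))) with hinj | hinj
  · -- then T ∪ T' is a (t+1)-way interaction
    have hcard1 : t + 1 ≤ (T ∪ T').card := by
      by_contra hle
      push_neg at hle
      have h1 : T = T ∪ T' :=
        Finset.eq_of_subset_of_card_le Finset.subset_union_left
          (by rw [hT.1]; omega)
      have h2 : T' ⊆ T := by rw [h1]; exact Finset.subset_union_right
      exact hne ((Finset.eq_of_subset_of_card_le h2 (by rw [hT.1, hT'.1])).symm)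
    have himg : ((T ∪ T').image Prod.fst).card = (T ∪ T').card :=
      Finset.card_image_iff.mpr hinj
    have hle : (T ∪ T').card ≤ t + 1 := by
      calc (T ∪ T').card = ((T ∪ T').image Prod.fst).card := himg.symm
        _ ≤ (Finset.univ : Finset (Fin (t + 1))).card :=
            Finset.card_le_card (Finset.subset_univ _)
        _ = t + 1 := by simp
    have hint : IsInteraction v (t + 1) (T ∪ T') := by
      refine ⟨le_antisymm hle hcard1, ?_, ?_⟩
      · rw [himg]; exact le_antisymm hle hcard1
      · intro p hp
        rcases Finset.mem_union.mp hp with h | h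
        · exact hT.2.2 p h
        · exact hT'.2.2 p h
    exact le_trans (Finset.card_le_card hsub) (hss _ hint)
  · -- conflicting values on a shared column: intersection is empty
    rw [Set.InjOn] at hinj
    push_neg at hinj
    obtain ⟨p, hp, q, hq, hpq, hpqne⟩ := hinj
    have : rho A (T ∪ T') = ∅ := by
      rw [Finset.eq_empty_iff_forall_notMem]
      intro r hr
      rw [mem_rho] at hr
      have h1 := hr p (by exact_mod_cast hp)
      have h2 := hr q (by exact_mod_cast hq)
      exact hpqne (Prod.ext hpq (by rw [← h1, ← h2, hpq]))
    have : rho A T ∩ rho A T' = ∅ :=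
      Finset.subset_empty.mp (this ▸ hsub)
    simp [this]
/-- In a `(d,t)`-detecting array with `t+1` columns, the rows covering a
`t`-way interaction `T` avoiding column `c` (with `d < v c`) take at least
`d+1` distinct values in column `c`. -/
lemma dta_distinct_vals {N t d : ℕ} (ht : 0 < t) (v : Fin (t + 1) → ℕ)
    (A : Fin N → Fin (t + 1) → ℕ) (hdta : IsDTA v d t A)
    {T : Finset (Fin (t + 1) × ℕ)} (hT : IsInteraction v t T)
    {c : Fin (t + 1)} (hc : ∀ p ∈ T, p.1 ≠ c) (hdc : d < v c) :
    d + 1 ≤ ((rho A T).image (fun r => A r c)).card := by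
  by_contra hcon
  push_neg at hcon
  set Sig := (rho A T).image (fun r => A r c) with hSig
  have hSigsub : Sig ⊆ Finset.range (v c) := by
    intro σ hσ
    rw [hSig, Finset.mem_image] at hσ
    obtain ⟨r, _, hr⟩ := hσ
    rw [Finset.mem_range, ← hr]
    exact hdta.1 r c
  obtain ⟨D, hSigD, hDsub, hDcard⟩ :=
    Finset.exists_subsuperset_card_eq (n := d) hSigsub (by omega) (by simp; omega)
  -- fix a pair of T to remove
  have hTne : T.Nonempty := Finset.card_pos.mp (by rw [hT.1]; omega)
  obtain ⟨p0, hp0⟩ := hTne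
  have hfstinj : Set.InjOn Prod.fst (T : Set (Fin (t + 1) × ℕ)) :=
    Finset.card_image_iff.mp (by rw [hT.1, hT.2.1])
  set f : ℕ → Finset (Fin (t + 1) × ℕ) := fun σ => insert (c, σ) (T.erase p0) with hf
  have hnotmem : ∀ σ : ℕ, (c, σ) ∉ T.erase p0 := by
    intro σ hmem
    exact hc _ (Finset.mem_of_mem_erase hmem) rfl
  set Ts : Finset (Finset (Fin (t + 1) × ℕ)) := D.image f with hTs
  have hTscard : Ts.card = d := by
    rw [hTs, Finset.card_image_of_injOn, hDcard]
    intro σ _ σ' _ heq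
    have : (c, σ) ∈ f σ' := by
      rw [← heq, hf]; exact Finset.mem_insert_self _ _
    rw [hf] at this
    rcases Finset.mem_insert.mp this with h | h
    · exact (Prod.ext_iff.mp h).2
    · exact absurd h (hnotmem σ)
  have hint : ∀ T' ∈ Ts, IsInteraction v t T' := by
    intro T' hT'
    rw [hTs, Finset.mem_image] at hT'
    obtain ⟨σ, hσD, hσ⟩ := hT'
    subst hσ
    have hcard : (f σ).card = t := by
      rw [hf, Finset.card_insert_of_notMem (hnotmem σ),
        Finset.card_erase_of_mem hp0, hT.1]
      omega
    refine ⟨hcard, ?_, ?_⟩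
    · have himg : (f σ).image Prod.fst = insert c ((T.erase p0).image Prod.fst) := by
        rw [hf, Finset.image_insert]
      rw [himg, Finset.card_insert_of_notMem, Finset.card_image_of_injOn]
      · rw [Finset.card_erase_of_mem hp0, hT.1]; omega
      · exact hfstinj.mono (by exact_mod_cast Finset.erase_subset _ _)
      · intro hmem
        rw [Finset.mem_image] at hmem
        obtain ⟨q, hq, hq2⟩ := hmem
        exact hc q (Finset.mem_of_mem_erase hq) hq2
    · intro p hp
      rw [hf] at hp
      rcases Finset.mem_insert.mp hp with h | h
      · subst h; simpa using Finset.mem_range.mp (hDsub hσD)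
      · exact hT.2.2 p (Finset.mem_of_mem_erase h)
  have hTnot : T ∉ Ts := by
    intro hmem
    rw [hTs, Finset.mem_image] at hmem
    obtain ⟨σ, _, hσ⟩ := hmem
    have : (c, σ) ∈ T := by rw [← hσ, hf]; exact Finset.mem_insert_self _ _
    exact hc _ this rfl
  have hsub : rho A T ⊆ rhoSet A Ts := by
    intro r hr
    have hsigSig : A r c ∈ Sig := by
      rw [hSig, Finset.mem_image]; exact ⟨r, hr, rfl⟩
    have hfD : f (A r c) ∈ Ts := by
      rw [hTs, Finset.mem_image]; exact ⟨A r c, hSigD hsigSig, rfl⟩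
    rw [rhoSet]
    rw [Finset.mem_sup]
    refine ⟨f (A r c), hfD, ?_⟩
    rw [mem_rho]
    intro p hp
    rw [hf] at hp
    rcases Finset.mem_insert.mp hp with h | h
    · subst h; rfl
    · exact (mem_rho A T r).mp hr p (Finset.mem_of_mem_erase h)
  exact hTnot ((hdta.2 T hT Ts hTscard hint).mp hsub)
/-- Counting: with `N = (d+1)·∏_{i≠0} v i` rows and every `t`-way interaction
covered at least `d+1` times, every `t`-way interaction avoiding column `0` is
covered exactly `d+1` times. -/
lemma rho_card_eq {N t d : ℕ} (ht : 0 < t) (v : Fin (t + 1) → ℕ)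
    (A : Fin N → Fin (t + 1) → ℕ) (hA : IsArray v A)
    (hN : N = (d + 1) * ∏ i ∈ Finset.univ.filter (fun i : Fin (t + 1) => (i : ℕ) ≠ 0), v i)
    (hMCA : ∀ T, IsInteraction v t T → d + 1 ≤ (rho A T).card)
    {T : Finset (Fin (t + 1) × ℕ)} (hT : IsInteraction v t T)
    (hc : ∀ p ∈ T, (p.1 : ℕ) ≠ 0) :
    (rho A T).card = d + 1 := by
  classical
  set B := Finset.univ.filter (fun i : Fin (t + 1) => (i : ℕ) ≠ 0) with hB
  set g : Fin N → (Fin (t + 1) → ℕ) := fun r j => if (j : ℕ) = 0 then 0 else A r j with hg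
  set F : Finset (Fin (t + 1) → ℕ) :=
    Fintype.piFinset (fun j => if (j : ℕ) = 0 then ({0} : Finset ℕ) else Finset.range (v j))
    with hF
  have hBcard : B.card = t := by
    have hBe : B = Finset.univ.erase (0 : Fin (t + 1)) := by
      ext i
      simp [hB, Finset.mem_erase]
    rw [hBe, Finset.card_erase_of_mem (Finset.mem_univ _)]
    simp
  have hgF : ∀ r, g r ∈ F := by
    intro r
    rw [hF, Fintype.mem_piFinset]
    intro j
    by_cases h : (j : ℕ) = 0
    · simp [hg, Fin.val_eq_zero_iff.mp h]
    · simp [hg, h, mt Fin.val_eq_zero_iff.mpr h, hA r j]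
  have hsum : ∑ f ∈ F, (Finset.univ.filter fun r => g r = f).card = N := by
    have := (Finset.card_eq_sum_card_fiberwise (fun r (_ : r ∈ Finset.univ) => hgF r)).symm
    simpa using this
  have hFcard : F.card = ∏ i ∈ B, v i := by
    calc F.card
        = ∏ i : Fin (t + 1),
            (if (i : ℕ) = 0 then ({0} : Finset ℕ) else Finset.range (v i)).card := by
          rw [hF, Fintype.card_piFinset]
      _ = ∏ i : Fin (t + 1), (if (i : ℕ) ≠ 0 then v i else 1) := by
          refine Finset.prod_congr rfl fun i _ => ?_
          by_cases h : (i : ℕ) = 0 <;> simp [h]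
      _ = ∏ i ∈ B, v i := (Finset.prod_filter _ _).symm
  have hf0 : ∀ f ∈ F, ∀ j : Fin (t + 1), (j : ℕ) = 0 → f j = 0 := by
    intro f hf j hj
    rw [hF, Fintype.mem_piFinset] at hf
    have := hf j
    rw [if_pos hj] at this
    simpa using this
  have hfv : ∀ f ∈ F, ∀ j : Fin (t + 1), (j : ℕ) ≠ 0 → f j < v j := by
    intro f hf j hj
    rw [hF, Fintype.mem_piFinset] at hf
    have := hf j
    rw [if_neg hj] at this
    simpa using this
  have hfiber : ∀ f ∈ F,
      (Finset.univ.filter fun r => g r = f) = rho A (B.image fun j => (j, f j)) := by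
    intro f hf
    ext r
    rw [Finset.mem_filter, mem_rho]
    constructor
    · rintro ⟨-, hgr⟩ p hp
      rw [Finset.mem_image] at hp
      obtain ⟨j, hjB, hje⟩ := hp
      subst hje
      have hj0 : (j : ℕ) ≠ 0 := (Finset.mem_filter.mp hjB).2
      have := congrFun hgr j
      rw [hg] at this
      simpa [if_neg hj0, mt Fin.val_eq_zero_iff.mpr hj0] using this
    · intro h
      refine ⟨Finset.mem_univ _, ?_⟩
      funext j
      by_cases hj : (j : ℕ) = 0
      · rw [hg]
        simp only [if_pos hj]
        exact (hf0 f hf j hj).symm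
      · have hjB : j ∈ B := by simp [hB, hj, mt Fin.val_eq_zero_iff.mpr hj]
        have := h (j, f j) (Finset.mem_image_of_mem _ hjB)
        rw [hg]
        simpa [if_neg hj, mt Fin.val_eq_zero_iff.mpr hj] using this
  have hTf_int : ∀ f ∈ F, IsInteraction v t (B.image fun j => (j, f j)) := by
    intro f hf
    have hinj : Set.InjOn (fun j => (j, f j)) (B : Set (Fin (t + 1))) := by
      intro a _ b _ hab
      exact (Prod.ext_iff.mp hab).1
    refine ⟨?_, ?_, ?_⟩
    · rw [Finset.card_image_of_injOn hinj, hBcard]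
    · have : Finset.image (Prod.fst ∘ fun j => (j, f j)) B = B := by
        ext x
        simp
      rw [Finset.image_image, this, hBcard]
    · intro p hp
      rw [Finset.mem_image] at hp
      obtain ⟨j, hjB, hje⟩ := hp
      subst hje
      exact hfv f hf j (Finset.mem_filter.mp hjB).2
  have hall : ∀ f ∈ F, (Finset.univ.filter fun r => g r = f).card = d + 1 := by
    have hge : ∀ f ∈ F, d + 1 ≤ (Finset.univ.filter fun r => g r = f).card := by
      intro f hf
      rw [hfiber f hf]
      exact hMCA _ (hTf_int f hf)
    by_contra hcon
    push_neg at hcon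
    obtain ⟨f0, hf0F, hne⟩ := hcon
    have hlt : (d + 1) * F.card < ∑ f ∈ F, (Finset.univ.filter fun r => g r = f).card := by
      have := Finset.sum_lt_sum (f := fun _ => d + 1)
        (g := fun f => (Finset.univ.filter fun r => g r = f).card)
        (fun i hi => hge i hi) ⟨f0, hf0F, lt_of_le_of_ne (hge f0 hf0F) (Ne.symm hne)⟩
      simpa [Finset.sum_const, mul_comm] using this
    rw [hsum, hN, hFcard] at hlt
    exact lt_irrefl _ (hB ▸ hlt)
  -- now identify T with one of the fibers
  have hTpos : 0 < (rho A T).card := lt_of_lt_of_le (Nat.succ_pos d) (hMCA T hT)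
  obtain ⟨r0, hr0⟩ := Finset.card_pos.mp hTpos
  have hgr0F := hgF r0
  have hTsub : T ⊆ B.image fun j => (j, g r0 j) := by
    intro p hp
    rw [Finset.mem_image]
    refine ⟨p.1, by simp [hB, hc p hp, mt Fin.val_eq_zero_iff.mpr (hc p hp)], ?_⟩
    have : g r0 p.1 = p.2 := by
      rw [hg]
      simp only [if_neg (hc p hp)]
      exact (mem_rho A T r0).mp hr0 p hp
    rw [this]
  have hTeq : T = B.image fun j => (j, g r0 j) := by
    refine Finset.eq_of_subset_of_card_le hTsub ?_
    rw [(hTf_int _ hgr0F).1, hT.1]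
  rw [hTeq, ← hfiber _ hgr0F]
  exact hall _ hgr0F

/-- Theorem: for `k = t+1` and `N = (d+1)·∏_{i=2}^{t+1} v_i`, an
array is an optimum `(d,t)`-DTA meeting the lower bound iff it is a
super-simple `MCA_{d+1}` of optimum size `N`. -/
theorem stmt_7 {t d N : ℕ} (ht : 0 < t) (hd : 0 < d)
    (v : Fin (t + 1) → ℕ) (hmono : Monotone v) (hv2 : 2 ≤ v 0) (hdv : d < v 0)
    (hN : N = (d + 1) * ∏ i ∈ Finset.univ.filter (fun i : Fin (t + 1) => (i : ℕ) ≠ 0), v i)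
    (A : Fin N → Fin (t + 1) → ℕ) (hA : IsArray v A) :
    IsDTA v d t A ↔ (IsSuperSimple v t A ∧ IsMCA v (d + 1) t A) := by
  constructor
  · -- DTA ⟹ super-simple MCA
    intro hdta
    have hMCA : ∀ T, IsInteraction v t T → d + 1 ≤ (rho A T).card := by
      intro T hT
      have himg : (T.image Prod.fst).card = t := hT.2.1
      have hex : ∃ c : Fin (t + 1), c ∉ T.image Prod.fst := by
        by_contra h
        push_neg at h
        have hsub : (Finset.univ : Finset (Fin (t + 1))) ⊆ T.image Prod.fst :=
          fun c _ => h c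
        have := Finset.card_le_card hsub
        rw [himg] at this
        simp at this
      obtain ⟨c, hcm⟩ := hex
      have hc : ∀ p ∈ T, p.1 ≠ c :=
        fun p hp he => hcm (he ▸ Finset.mem_image_of_mem _ hp)
      have hdc : d < v c := lt_of_lt_of_le hdv (hmono (Fin.zero_le c))
      calc d + 1 ≤ ((rho A T).image (fun r => A r c)).card :=
            dta_distinct_vals ht v A hdta hT hc hdc
        _ ≤ (rho A T).card := Finset.card_image_le
    refine ⟨?_, hdta.1, hMCA⟩
    -- super-simple
    intro S hS
    have himgS : S.image Prod.fst = Finset.univ :=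
      Finset.eq_univ_of_card _ (by rw [hS.2.1]; simp)
    have h0 : (0 : Fin (t + 1)) ∈ S.image Prod.fst := by
      rw [himgS]; exact Finset.mem_univ _
    obtain ⟨p0, hp0S, hp01⟩ := Finset.mem_image.mp h0
    have hfstinj : Set.InjOn Prod.fst (S : Set (Fin (t + 1) × ℕ)) :=
      Finset.card_image_iff.mp (by rw [hS.1, hS.2.1])
    set T := S.erase p0 with hTdef
    have hTcard : T.card = t := by
      rw [hTdef, Finset.card_erase_of_mem hp0S, hS.1]
      omega
    have hTint : IsInteraction v t T := by
      refine ⟨hTcard, ?_, ?_⟩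
      · rw [Finset.card_image_iff.mpr
          (hfstinj.mono (by exact_mod_cast Finset.erase_subset _ _)), hTcard]
      · intro p hp
        exact hS.2.2 p (Finset.mem_of_mem_erase hp)
    have hc' : ∀ p ∈ T, (p.1 : ℕ) ≠ 0 := by
      intro p hp h0'
      have hpS := Finset.mem_of_mem_erase hp
      have hfe : p.1 = p0.1 := by
        rw [hp01]
        exact Fin.ext (by simpa using h0')
      exact (Finset.ne_of_mem_erase hp) (hfstinj hpS hp0S hfe)
    have hc : ∀ p ∈ T, p.1 ≠ (0 : Fin (t + 1)) := by
      intro p hp he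
      exact hc' p hp (by rw [he]; rfl)
    have hcard : (rho A T).card = d + 1 := rho_card_eq ht v A hA hN hMCA hTint hc'
    have himgcard : d + 1 ≤ ((rho A T).image (fun r => A r 0)).card :=
      dta_distinct_vals ht v A hdta hTint hc hdv
    have hinj : Set.InjOn (fun r => A r 0) ((rho A T) : Set (Fin N)) := by
      apply Finset.card_image_iff.mp
      have hle := Finset.card_image_le (s := rho A T) (f := fun r => A r 0)
      omega
    rw [Finset.card_le_one]
    intro r1 h1 r2 h2
    have hs1 : r1 ∈ rho A T := rho_anti A (Finset.erase_subset _ _) h1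
    have hs2 : r2 ∈ rho A T := rho_anti A (Finset.erase_subset _ _) h2
    have hv1 : A r1 0 = p0.2 := by
      have := (mem_rho A S r1).mp h1 p0 hp0S
      rw [hp01] at this
      exact this
    have hv2' : A r2 0 = p0.2 := by
      have := (mem_rho A S r2).mp h2 p0 hp0S
      rw [hp01] at this
      exact this
    exact hinj (by exact_mod_cast hs1) (by exact_mod_cast hs2) (show A r1 0 = A r2 0 by rw [hv1, hv2'])
  · -- super-simple MCA ⟹ DTA
    rintro ⟨hss, hmca⟩
    refine ⟨hA, ?_⟩
    intro T hT Ts hTscard hTsint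
    constructor
    · intro hsub
      by_contra hTnot
      have hbound : (rho A T).card ≤ d := by
        have h1 : rho A T ⊆ Ts.biUnion (fun T' => rho A T ∩ rho A T') := by
          intro r hr
          have hmem : r ∈ rhoSet A Ts := hsub hr
          rw [rhoSet, Finset.mem_sup] at hmem
          obtain ⟨T', hT', hrT'⟩ := hmem
          exact Finset.mem_biUnion.mpr ⟨T', hT', Finset.mem_inter.mpr ⟨hr, hrT'⟩⟩
        calc (rho A T).card ≤ (Ts.biUnion fun T' => rho A T ∩ rho A T').card :=
              Finset.card_le_card h1
          _ ≤ ∑ T' ∈ Ts, (rho A T ∩ rho A T').card := Finset.card_biUnion_le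
          _ ≤ ∑ _T' ∈ Ts, 1 := Finset.sum_le_sum fun T' hT' =>
              inter_card_le_one v A hss hT (hTsint T' hT')
                (fun he => hTnot (he ▸ hT'))
          _ = d := by simp [hTscard]
      have := hmca.2 T hT
      omega
    · intro hmem r hr
      rw [rhoSet, Finset.mem_sup]
      exact ⟨T, hmem, hr⟩
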